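/- Let k ≥ 3 and N ≥ 1 be integers. If A ⊆ {1, …, N} is k-AP-free, then there exists a corner-free set Q ⊆ {1, …, k²N}^{k−1} with |Q| ≥ N^{k−2} · |A|. -/
import Mathlib


/-- `A` is `k`-AP-free: it contains no nontrivial `k`-term arithmetic progression. -/
def APFree (k : ℕ) (A : Set ℤ) : Prop :=
  ¬ ∃ (a δ : ℤ), δ ≠ 0 ∧ ∀ j : ℕ, j < k → a + (j : ℤ) * δ ∈ A

/-- `Q ⊆ ℤ^n` is corner-free: there do not exist `x ∈ Q` and `δ ≠ 0` with
`x + δ·e_j ∈ Q` for every `j`. -/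
def CornerFree {n : ℕ} (Q : Set (Fin n → ℤ)) : Prop :=
  ¬ ∃ (x : Fin n → ℤ) (δ : ℤ), δ ≠ 0 ∧ x ∈ Q ∧
    ∀ j : Fin n, Function.update x j (x j + δ) ∈ Q

lemma sum_update_aux {n : ℕ} (c x : Fin n → ℤ) (j : Fin n) (v : ℤ) :
    ∑ i, c i * Function.update x j v i = (∑ i, c i * x i) + c j * (v - x j) := by
  have h : (fun i => c i * Function.update x j v i)
      = Function.update (fun i => c i * x i) j (c j * v) := by
    funext i
    by_cases h : i = j
    · subst h; simp
    · simp [Function.update_of_ne h]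
  rw [h, Finset.sum_update_of_mem (Finset.mem_univ j),
    Finset.sdiff_singleton_eq_erase,
    ← Finset.add_sum_erase Finset.univ (fun i => c i * x i) (Finset.mem_univ j)]
  ring

/-- a `k`-AP-free set `A ⊆ {1, …, N}` yields a corner-free set
`Q ⊆ {1, …, k²N}^(k-1)` with `|Q| ≥ N^(k-2) · |A|`. -/
theorem stmt7 (k N : ℕ) (hk : 3 ≤ k) (hN : 1 ≤ N) (A : Finset ℤ)
    (hA : A ⊆ Finset.Icc 1 (N : ℤ)) (hAP : APFree k (↑A : Set ℤ)) :
    ∃ Q : Finset (Fin (k - 1) → ℤ),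
      Q ⊆ Fintype.piFinset (fun _ => Finset.Icc (1 : ℤ) ((k : ℤ) ^ 2 * N)) ∧
      CornerFree (↑Q : Set (Fin (k - 1) → ℤ)) ∧
      N ^ (k - 2) * A.card ≤ Q.card := by
  haveI : NeZero (k - 1) := ⟨by omega⟩
  set c : Fin (k - 1) → ℤ := fun j => (j : ℤ) + 1 with hc
  have hc1 : ∀ j : Fin (k - 1), 1 ≤ c j := fun j => by
    show (1 : ℤ) ≤ (j : ℤ) + 1
    omega
  set L : (Fin (k - 1) → ℤ) → ℤ := fun x => ∑ i, c i * x i with hL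
  set T : ℤ := ∑ i ∈ Finset.univ.erase (0 : Fin (k - 1)), c i with hT
  have hT0 : 0 ≤ T := Finset.sum_nonneg fun i _ => by linarith [hc1 i]
  have hTle : T ≤ ((k : ℤ) - 2) * ((k : ℤ) - 1) := by
    have hbd : ∀ i ∈ Finset.univ.erase (0 : Fin (k - 1)), c i ≤ (k : ℤ) - 1 := by
      intro i _
      show (i : ℤ) + 1 ≤ (k : ℤ) - 1
      have h1 : (i : ℕ) < k - 1 := i.isLt
      omega
    calc T ≤ ∑ _i ∈ Finset.univ.erase (0 : Fin (k - 1)), ((k : ℤ) - 1) :=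
          Finset.sum_le_sum hbd
      _ = ((Finset.univ.erase (0 : Fin (k - 1))).card : ℤ) * ((k : ℤ) - 1) := by
          rw [Finset.sum_const, nsmul_eq_mul]
      _ = ((k : ℤ) - 2) * ((k : ℤ) - 1) := by
          rw [Finset.card_erase_of_mem (Finset.mem_univ _), Finset.card_univ,
            Fintype.card_fin]
          have : ((k - 1 - 1 : ℕ) : ℤ) = (k : ℤ) - 2 := by omega
          rw [this]
  set Q : Finset (Fin (k - 1) → ℤ) :=
    (Fintype.piFinset fun _ : Fin (k - 1) => Finset.Icc (1 : ℤ) ((k : ℤ) ^ 2 * N)).filter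
      (fun x => L x - T * N ∈ A) with hQ
  refine ⟨Q, Finset.filter_subset _ _, ?_, ?_⟩
  · -- corner-free
    rintro ⟨x, δ, hδ, hx, hupd⟩
    have hx' : L x - T * N ∈ A := (Finset.mem_filter.mp hx).2
    apply hAP
    refine ⟨L x - T * N, δ, hδ, ?_⟩
    intro m hm
    rcases Nat.eq_zero_or_pos m with hm0 | hm0
    · subst hm0; simpa using hx'
    · set j : Fin (k - 1) := ⟨m - 1, by omega⟩ with hj
      have hupd' : (∑ i, c i * Function.update x j (x j + δ) i) - T * N ∈ A :=
        (Finset.mem_filter.mp (hupd j)).2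
      rw [sum_update_aux] at hupd'
      have hcj : c j = (m : ℤ) := by
        show ((m - 1 : ℕ) : ℤ) + 1 = (m : ℤ)
        omega
      have heq : (L x - T * N) + (m : ℤ) * δ
          = (∑ i, c i * x i) + c j * (x j + δ - x j) - T * N := by
        rw [hcj]
        show (∑ i, c i * x i) - T * N + (m : ℤ) * δ = _
        ring
      rw [heq]
      exact hupd'
  · -- cardinality
    set P : Fin (k - 1) → Finset ℤ := fun j =>
      if j = 0 then ({0} : Finset ℤ) else Finset.Icc (1 : ℤ) (N : ℤ) with hP
    set D : Finset (ℤ × (Fin (k - 1) → ℤ)) := A ×ˢ Fintype.piFinset P with hD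
    set S : (Fin (k - 1) → ℤ) → ℤ :=
      fun w => ∑ i ∈ Finset.univ.erase (0 : Fin (k - 1)), c i * w i with hS
    set ψ : ℤ × (Fin (k - 1) → ℤ) → (Fin (k - 1) → ℤ) := fun p =>
      Function.update p.2 0 (p.1 + T * N - S p.2) with hψ
    have hkN : (N : ℤ) ≥ 1 := by exact_mod_cast hN
    have hk' : (3 : ℤ) ≤ (k : ℤ) := by exact_mod_cast hk
    have hmem : ∀ p ∈ D, ψ p ∈ Q := by
      rintro ⟨a, y⟩ hp
      obtain ⟨ha, hy⟩ := Finset.mem_product.mp hp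
      have hy' := Fintype.mem_piFinset.mp hy
      have hy0 : y 0 = 0 := by
        have := hy' 0; simp [hP] at this; exact this
      have hyj : ∀ j : Fin (k - 1), j ≠ 0 → 1 ≤ y j ∧ y j ≤ (N : ℤ) := by
        intro j hj
        have := hy' j; simp [hP, hj] at this; exact this
      have haN : 1 ≤ a ∧ a ≤ (N : ℤ) := by
        have := hA ha; simp at this; exact this
      have hsum_lb : T ≤ S y := by
        apply Finset.sum_le_sum
        intro i hi
        have hi0 : i ≠ 0 := (Finset.mem_erase.mp hi).1
        have := hyj i hi0
        nlinarith [hc1 i]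
      have hsum_ub : S y ≤ T * N := by
        rw [hT, Finset.sum_mul]
        apply Finset.sum_le_sum
        intro i hi
        have hi0 : i ≠ 0 := (Finset.mem_erase.mp hi).1
        have := hyj i hi0
        nlinarith [hc1 i]
      have hψeq : ψ (a, y) = Function.update y 0 (a + T * N - S y) := rfl
      rw [hψeq, hQ, Finset.mem_filter]
      constructor
      · rw [Fintype.mem_piFinset]
        intro j
        by_cases hj : j = 0
        · subst hj
          rw [Function.update_self, Finset.mem_Icc]
          constructor
          · linarith [haN.1]
          · have h1 : a + T * N - S y ≤ (N : ℤ) + T * N - T := by linarith [haN.2]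
            have h2 : (N : ℤ) + T * N - T ≤ (k : ℤ) ^ 2 * N := by nlinarith
            linarith
        · rw [Function.update_of_ne hj, Finset.mem_Icc]
          have := hyj j hj
          exact ⟨this.1, by nlinarith [this.2]⟩
      · have hLψ : L (Function.update y 0 (a + T * N - S y)) = a + T * N := by
          show (∑ i, c i * Function.update y 0 (a + T * N - S y) i) = a + T * N
          rw [sum_update_aux]
          have hc0 : c 0 = 1 := by show ((0 : Fin (k - 1)) : ℤ) + 1 = 1; simp
          have hsplit : (∑ i, c i * y i) = c 0 * y 0 + S y :=
            (Finset.add_sum_erase Finset.univ (fun i => c i * y i)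
              (Finset.mem_univ (0 : Fin (k - 1)))).symm
          rw [hsplit, hc0, hy0]
          ring
        rw [hLψ]
        simpa using ha
    have hinj : Set.InjOn ψ D := by
      rintro ⟨a, y⟩ hp ⟨b, z⟩ hq heq
      obtain ⟨ha, hy⟩ := Finset.mem_product.mp (Finset.mem_coe.mp hp)
      obtain ⟨hb, hz⟩ := Finset.mem_product.mp (Finset.mem_coe.mp hq)
      have hy0 : y 0 = 0 := by
        have := Fintype.mem_piFinset.mp hy 0; simp [hP] at this; exact this
      have hz0 : z 0 = 0 := by
        have := Fintype.mem_piFinset.mp hz 0; simp [hP] at this; exact this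
      have ey : ψ (a, y) = Function.update y 0 (a + T * N - S y) := rfl
      have ez : ψ (b, z) = Function.update z 0 (b + T * N - S z) := rfl
      rw [ey, ez] at heq
      have hyz : y = z := by
        funext j
        by_cases hj : j = 0
        · subst hj; rw [hy0, hz0]
        · have := congrFun heq j
          rwa [Function.update_of_ne hj, Function.update_of_ne hj] at this
      have h0 := congrFun heq 0
      rw [Function.update_self, Function.update_self, hyz] at h0
      have hab : a = b := by linarith [h0]
      rw [hab, hyz]
    have hcard : D.card ≤ Q.card := Finset.card_le_card_of_injOn ψ hmem hinj
    have hDcard : D.card = A.card * N ^ (k - 2) := by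
      rw [hD, Finset.card_product, Fintype.card_piFinset]
      congr 1
      rw [← Finset.prod_erase_mul Finset.univ _ (Finset.mem_univ (0 : Fin (k - 1)))]
      have h1 : (P 0).card = 1 := by simp [hP]
      rw [h1, mul_one]
      rw [Finset.prod_congr rfl (fun i hi => by
        have hi0 : i ≠ 0 := (Finset.mem_erase.mp hi).1
        simp only [hP, if_neg hi0]
        rw [Int.card_Icc]
        try omega)]
      rw [Finset.prod_const, Finset.card_erase_of_mem (Finset.mem_univ _),
        Finset.card_univ, Fintype.card_fin]
      congr 1
      omega
    rw [hDcard, mul_comm] at hcard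
    exact hcard
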